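/- Let f : ℝⁿ → ℝ be a nonconstant polynomial and 𝒫(x) = Σ_{α ∈ Γ(f) ∩ ℤ₊ⁿ} |x^α|. If there exist constants c₁, c₂, R > 0 with c₁𝒫(x) ≤ f(x) ≤ c₂𝒫(x) for all ‖x‖ > R, then f is non-degenerate at infinity and f(x) ≥ 0 for all ‖x‖ > R. -/

import Mathlib

open MvPolynomial Set Asymptotics Filter

/-- The exponent vector of a monomial, viewed in `ℝⁿ`. -/
noncomputable def expR {n : ℕ} (α : Fin n →₀ ℕ) : Fin n → ℝ := fun i => (α i : ℝ)

/-- The Newton polyhedron (at infinity) of a polynomial: the convex hull of its exponents. -/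
noncomputable def Newton {n : ℕ} (f : MvPolynomial (Fin n) ℝ) : Set (Fin n → ℝ) :=
  convexHull ℝ (expR '' (f.support : Set (Fin n →₀ ℕ)))

/-- `d(q, Γ(f))`: the minimal value of `⟨q, ·⟩` on the Newton polyhedron. -/
noncomputable def dMin {n : ℕ} (q : Fin n → ℝ) (f : MvPolynomial (Fin n) ℝ) : ℝ :=
  sInf ((fun α : Fin n → ℝ => ∑ i, q i * α i) '' Newton f)

/-- `Δ(q, Γ(f))`: the face of the Newton polyhedron where `⟨q, ·⟩` attains its minimum. -/
noncomputable def face {n : ℕ} (q : Fin n → ℝ) (f : MvPolynomial (Fin n) ℝ) : Set (Fin n → ℝ) :=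
  {α ∈ Newton f | ∑ i, q i * α i = dMin q f}

/-- The Newton boundary at infinity: faces `Δ(q, Γ(f))` with `min_j q_j < 0`. -/
noncomputable def NewtonBoundary {n : ℕ} (f : MvPolynomial (Fin n) ℝ) : Set (Set (Fin n → ℝ)) :=
  {Δ | ∃ q : Fin n → ℝ, (∃ j, q j < 0) ∧ Δ = face q f}

open Classical in
/-- The truncation `f_Δ` of `f` to a face `Δ`. -/
noncomputable def trunc {n : ℕ} (f : MvPolynomial (Fin n) ℝ) (Δ : Set (Fin n → ℝ)) :
    MvPolynomial (Fin n) ℝ :=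
  ∑ α ∈ f.support.filter (fun α => expR α ∈ Δ), monomial α (f.coeff α)

/-- `𝒫(x) = Σ_{α ∈ Γ(f) ∩ ℤ₊ⁿ} |x^α|`. -/
noncomputable def P {n : ℕ} (f : MvPolynomial (Fin n) ℝ) (x : Fin n → ℝ) : ℝ :=
  ∑' α : {α : Fin n →₀ ℕ // expR α ∈ Newton f}, |∏ i, x i ^ ((α : Fin n →₀ ℕ) i)|

/-- Non-degeneracy at infinity. -/
def Nondeg {n : ℕ} (f : MvPolynomial (Fin n) ℝ) : Prop :=
  ∀ Δ ∈ NewtonBoundary f, ¬ ∃ x : Fin n → ℝ, (∀ i, x i ≠ 0) ∧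
    eval x (trunc f Δ) = 0 ∧ ∀ i, eval x (pderiv i (trunc f Δ)) = 0

/-- The norm of a polynomial: the maximum of the absolute values of its coefficients. -/
noncomputable def polyNorm {n : ℕ} (f : MvPolynomial (Fin n) ℝ) : ℝ :=
  ⨆ α ∈ f.support, |f.coeff α|

/-- Stable compactness of the zero set of `f`. -/
def StablyCompact {n : ℕ} (f : MvPolynomial (Fin n) ℝ) : Prop :=
  ∃ ε > 0, ∀ g : MvPolynomial (Fin n) ℝ, Newton g ⊆ Newton f → polyNorm g < ε →
    IsCompact {x : Fin n → ℝ | eval x (f + g) = 0}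

/-- Product of rpow's of a fixed positive base is rpow of the sum. -/
lemma prod_rpow_eq_rpow_sum {n : ℕ} {t : ℝ} (ht : 0 < t) (w : Fin n → ℝ) :
    (∏ i, t ^ (w i)) = t ^ (∑ i, w i) := by
  simp only [Real.rpow_def_of_pos ht]
  rw [Finset.mul_sum, Real.exp_sum]

/-- Finiteness of the set of lattice points whose exponent vector lies in the
Newton polyhedron. -/
lemma newton_lattice_finite {n : ℕ} (f : MvPolynomial (Fin n) ℝ) :
    {α : Fin n →₀ ℕ | expR α ∈ Newton f}.Finite := by
  have hcpt : IsCompact (Newton f) :=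
    ((f.support.finite_toSet).image expR).isCompact_convexHull ℝ
  obtain ⟨M, hM⟩ := hcpt.isBounded.exists_norm_le
  have hpi : (Set.univ.pi fun _ : Fin n => Set.Iic (⌊M⌋₊)).Finite :=
    Set.Finite.pi fun _ => Set.finite_Iic _
  have hpre : ((fun α : Fin n →₀ ℕ => (α : Fin n → ℕ)) ⁻¹'
      (Set.univ.pi fun _ : Fin n => Set.Iic (⌊M⌋₊))).Finite :=
    Set.Finite.preimage (DFunLike.coe_injective.injOn) hpi
  refine hpre.subset ?_
  intro α hα
  intro i _
  have h1 : ‖expR α‖ ≤ M := hM _ hα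
  have h2 : |(α i : ℝ)| ≤ ‖expR α‖ := by
    simpa [Real.norm_eq_abs, expR] using norm_le_pi_norm (expR α) i
  have h3 : ((α i : ℕ) : ℝ) ≤ M := le_trans (le_abs_self _) (le_trans h2 h1)
  exact Nat.le_floor h3

theorem stmt9 {n : ℕ} (f : MvPolynomial (Fin n) ℝ) (hf : f.totalDegree ≠ 0)
    (c₁ c₂ R : ℝ) (hc₁ : 0 < c₁) (hc₂ : 0 < c₂) (hR : 0 < R)
    (hbound : ∀ x : Fin n → ℝ, R < ‖x‖ →
      c₁ * P f x ≤ eval x f ∧ eval x f ≤ c₂ * P f x) :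
    Nondeg f ∧ ∀ x : Fin n → ℝ, R < ‖x‖ → 0 ≤ eval x f := by
  classical
  have hPnn : ∀ x : Fin n → ℝ, 0 ≤ P f x := fun x => tsum_nonneg fun a => abs_nonneg _
  have hnonneg : ∀ x : Fin n → ℝ, R < ‖x‖ → 0 ≤ eval x f := by
    intro x hx
    have h := (hbound x hx).1
    nlinarith [hPnn x]
  refine ⟨?_, hnonneg⟩
  -- non-degeneracy
  have hT : f.support.Nonempty := by
    rw [Finset.nonempty_iff_ne_empty]
    intro h
    apply hf
    have hz : f = 0 := MvPolynomial.support_eq_empty.mp h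
    simp [hz]
  haveI hfin : Finite {α : Fin n →₀ ℕ // expR α ∈ Newton f} :=
    (newton_lattice_finite f).to_subtype
  rintro Δ ⟨q, ⟨j, hqj⟩, rfl⟩ ⟨x0, hx0, h0, -⟩
  set ℓ : (Fin n →₀ ℕ) → ℝ := fun α => ∑ i, q i * (α i : ℝ) with hℓdef
  set m : ℝ := f.support.inf' hT ℓ with hmdef
  obtain ⟨αs, hαsT, hαs⟩ := Finset.exists_mem_eq_inf' hT ℓ
  have hαsNewton : expR αs ∈ Newton f :=
    subset_convexHull ℝ _ ⟨αs, Finset.mem_coe.mpr hαsT, rfl⟩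
  -- the linear functional is bounded below by m on the Newton polyhedron
  have hlin : IsLinearMap ℝ (fun y : Fin n → ℝ => ∑ i, q i * y i) := by
    constructor
    · intro a b
      simp only [Pi.add_apply, mul_add]
      rw [Finset.sum_add_distrib]
    · intro c a
      simp only [Pi.smul_apply, smul_eq_mul, Finset.mul_sum]
      exact Finset.sum_congr rfl fun i _ => by ring
  have hlow : Newton f ⊆ {y : Fin n → ℝ | m ≤ ∑ i, q i * y i} := by
    apply convexHull_min _ (convex_halfSpace_ge hlin m)
    rintro y ⟨α, hα, rfl⟩
    exact Finset.inf'_le ℓ (Finset.mem_coe.mp hα)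
  -- dMin = m
  have hℓαs : ℓ αs = m := by rw [hmdef]; exact hαs.symm
  have himg : m ∈ (fun α : Fin n → ℝ => ∑ i, q i * α i) '' Newton f :=
    ⟨expR αs, hαsNewton, hℓαs⟩
  have hbdd : BddBelow ((fun α : Fin n → ℝ => ∑ i, q i * α i) '' Newton f) := by
    refine ⟨m, ?_⟩
    rintro y ⟨β, hβ, rfl⟩
    exact hlow hβ
  have hdMin : dMin q f = m := by
    refine le_antisymm (csInf_le hbdd himg) (le_csInf ⟨m, himg⟩ ?_)
    rintro y ⟨β, hβ, rfl⟩
    exact hlow hβ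
  -- the face filter is the set of support points with ℓ α = m
  have hface : ∀ α ∈ f.support, (expR α ∈ face q f ↔ ℓ α = m) := by
    intro α hα
    have hmem : expR α ∈ Newton f :=
      subset_convexHull ℝ _ ⟨α, Finset.mem_coe.mpr hα, rfl⟩
    simp only [face, Set.mem_setOf_eq, hdMin]
    exact ⟨fun h => h.2, fun h => ⟨hmem, h⟩⟩
  -- notation
  set A : (Fin n →₀ ℕ) → ℝ := fun α => f.coeff α * ∏ i, x0 i ^ α i with hAdef
  set X : ℝ := ∏ i, x0 i ^ αs i with hXdef
  have hX : X ≠ 0 := Finset.prod_ne_zero_iff.mpr fun i _ => pow_ne_zero _ (hx0 i)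
  set φ : ℝ → Fin n → ℝ := fun t i => x0 i * t ^ (q i) with hφdef
  -- the key monomial computation along the curve
  have hprod : ∀ t : ℝ, 0 < t → ∀ α : Fin n →₀ ℕ,
      (∏ i, (x0 i * t ^ (q i)) ^ (α i)) = (∏ i, x0 i ^ α i) * t ^ (ℓ α) := by
    intro t ht α
    calc (∏ i, (x0 i * t ^ q i) ^ (α i))
        = ∏ i, (x0 i ^ α i * (t ^ q i) ^ (α i)) := by
          exact Finset.prod_congr rfl fun i _ => mul_pow _ _ _
      _ = (∏ i, x0 i ^ α i) * ∏ i, (t ^ q i) ^ (α i) := Finset.prod_mul_distrib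
      _ = (∏ i, x0 i ^ α i) * ∏ i, t ^ (q i * (α i : ℝ)) := by
          congr 1
          refine Finset.prod_congr rfl fun i _ => ?_
          rw [← Real.rpow_natCast (t ^ q i) (α i), ← Real.rpow_mul ht.le]
      _ = (∏ i, x0 i ^ α i) * t ^ (ℓ α) := by
          rw [prod_rpow_eq_rpow_sum ht]
  -- evaluation of f along the curve
  have hφval : ∀ t : ℝ, 0 < t →
      eval (φ t) f = ∑ α ∈ f.support, A α * t ^ (ℓ α) := by
    intro t ht
    rw [eval_eq']
    refine Finset.sum_congr rfl fun α hα => ?_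
    rw [hφdef]
    simp only []
    rw [hprod t ht α, hAdef]
    ring
  -- lower bound on P along the curve
  have hPlb : ∀ t : ℝ, 0 < t → |X| * t ^ m ≤ P f (φ t) := by
    intro t ht
    have hterm := Summable.le_tsum (L := SummationFilter.unconditional _) (Summable.of_finite)
      (⟨αs, hαsNewton⟩ : {α : Fin n →₀ ℕ // expR α ∈ Newton f})
      (fun b _ => abs_nonneg (∏ i, (φ t) i ^ ((b : Fin n →₀ ℕ) i)))
    have hval : |∏ i, (φ t) i ^ (αs i)| = |X| * t ^ m := by
      rw [hφdef]
      simp only []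
      rw [hprod t ht αs, abs_mul, ← hXdef,
        abs_of_nonneg (Real.rpow_nonneg ht.le _), hℓαs]
    rw [← hval]
    exact hterm
  -- eventually the curve escapes the ball of radius R
  have hnormφ : ∀ᶠ t in nhdsWithin 0 (Set.Ioi (0:ℝ)), R < ‖φ t‖ := by
    have h1 : Tendsto (fun t : ℝ => |x0 j| * (t⁻¹) ^ (-(q j)))
        (nhdsWithin 0 (Set.Ioi (0:ℝ))) atTop :=
      Filter.Tendsto.const_mul_atTop (abs_pos.mpr (hx0 j))
        ((tendsto_rpow_atTop (by linarith)).comp tendsto_inv_nhdsGT_zero)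
    have h2 : Tendsto (fun t : ℝ => |x0 j| * t ^ (q j))
        (nhdsWithin 0 (Set.Ioi (0:ℝ))) atTop := by
      apply h1.congr'
      filter_upwards [self_mem_nhdsWithin] with t ht
      have ht' : (0:ℝ) < t := ht
      rw [Real.inv_rpow ht'.le, ← Real.rpow_neg ht'.le, neg_neg]
    filter_upwards [h2.eventually_gt_atTop R, self_mem_nhdsWithin] with t hgt ht
    have ht' : (0:ℝ) < t := ht
    calc R < |x0 j| * t ^ (q j) := hgt
      _ = |φ t j| := by
          rw [hφdef]
          simp only []
          rw [abs_mul, abs_of_nonneg (Real.rpow_nonneg ht'.le _)]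
      _ ≤ ‖φ t‖ := by
          simpa [Real.norm_eq_abs] using norm_le_pi_norm (φ t) j
  -- the normalized function g
  set g : ℝ → ℝ := fun t => ∑ α ∈ f.support, A α * t ^ (ℓ α - m) with hgdef
  -- eventual lower bound for g
  have hglb : ∀ᶠ t in nhdsWithin 0 (Set.Ioi (0:ℝ)), c₁ * |X| ≤ g t := by
    filter_upwards [hnormφ, self_mem_nhdsWithin] with t hnt ht
    have htp : (0:ℝ) < t := ht
    have htm : (0:ℝ) < t ^ m := Real.rpow_pos_of_pos htp m
    have hev : eval (φ t) f = t ^ m * g t := by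
      rw [hφval t htp, hgdef]
      simp only []
      rw [Finset.mul_sum]
      refine Finset.sum_congr rfl fun α hα => ?_
      rw [show ℓ α = m + (ℓ α - m) by ring, Real.rpow_add htp]
      ring_nf
    have hb := (hbound (φ t) hnt).1
    have hPl := hPlb t htp
    have hkey : c₁ * |X| * t ^ m ≤ g t * t ^ m := by
      calc c₁ * |X| * t ^ m = c₁ * (|X| * t ^ m) := by ring
        _ ≤ c₁ * P f (φ t) := by
            exact mul_le_mul_of_nonneg_left hPl hc₁.le
        _ ≤ eval (φ t) f := hb
        _ = g t * t ^ m := by rw [hev]; ring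
    exact le_of_mul_le_mul_right hkey htm
  -- the limit of g
  have hmle : ∀ α ∈ f.support, m ≤ ℓ α := fun α hα => Finset.inf'_le ℓ hα
  have hlim : Tendsto g (nhdsWithin 0 (Set.Ioi (0:ℝ)))
      (nhds (∑ α ∈ f.support, if ℓ α = m then A α else 0)) := by
    rw [hgdef]
    apply tendsto_finset_sum
    intro α hα
    have he : 0 ≤ ℓ α - m := sub_nonneg.mpr (hmle α hα)
    by_cases hcase : ℓ α = m
    · simp only [if_pos hcase, hcase, sub_self, Real.rpow_zero, mul_one]
      exact tendsto_const_nhds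
    · simp only [if_neg hcase]
      have hpos : 0 < ℓ α - m := lt_of_le_of_ne he (fun h => hcase (by linarith [h.symm]))
      have h0t : Tendsto (fun t : ℝ => t ^ (ℓ α - m)) (nhds 0) (nhds 0) := by
        have := (Real.continuousAt_rpow_const 0 (ℓ α - m) (Or.inr he)).tendsto
        rwa [Real.zero_rpow (ne_of_gt hpos)] at this
      have hmul : Tendsto (fun t : ℝ => A α * t ^ (ℓ α - m))
          (nhdsWithin 0 (Set.Ioi (0:ℝ))) (nhds (A α * 0)) :=
        tendsto_const_nhds.mul (h0t.mono_left nhdsWithin_le_nhds)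
      simpa using hmul
  -- identify the limit with the truncation value
  have htruncval : (∑ α ∈ f.support, if ℓ α = m then A α else 0)
      = eval x0 (trunc f (face q f)) := by
    rw [trunc, map_sum]
    rw [← Finset.sum_filter]
    refine Finset.sum_congr (Finset.filter_congr fun α hα => (hface α hα).symm) ?_
    intro α hα
    rw [eval_monomial, Finsupp.prod_pow, hAdef]
  rw [htruncval, h0] at hlim
  have hfinal : c₁ * |X| ≤ 0 := ge_of_tendsto hlim hglb
  have : 0 < c₁ * |X| := mul_pos hc₁ (abs_pos.mpr hX)
  linarith
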